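/- The Stefan-Dirichlet potential E(ξ̄) = -∑_{i=0}^{m} kᵢ(u_{i+1}-uᵢ) ln(F(ξᵢ/aᵢ) - F(ξ_{i+1}/aᵢ)) + ∑_{i=1}^{m} dᵢξᵢ²/4 is strictly convex on the open convex domain Ω = {ξ̄ ∈ ℝᵐ : ξ₁ > ⋯ > ξₘ > 0}. -/

import Mathlib

noncomputable def F (ξ : ℝ) : ℝ :=
  (1 / Real.sqrt Real.pi) * ∫ s in (0:ℝ)..ξ, Real.exp (-s ^ 2 / 4)

/-- Extension of `ξ = (ξ₁, …, ξₘ)` to indices `0, …, m+1`, with the convention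
`ξ_{m+1} = 0` (the value at index `0` is irrelevant: there `F(ξ₀/a₀) = F(+∞) = 1`). -/
def ext (m : ℕ) (ξ : Fin m → ℝ) : ℕ → ℝ :=
  fun i => if h : 1 ≤ i ∧ i ≤ m then ξ ⟨i - 1, by omega⟩ else 0

/-- The Stefan–Dirichlet potential
`E(ξ̄) = -∑_{i=0}^m kᵢ(u_{i+1}-uᵢ) ln(F(ξᵢ/aᵢ) - F(ξ_{i+1}/aᵢ)) + ∑_{i=1}^m dᵢξᵢ²/4`,
with conventions `F(ξ₀/a₀) = 1`, `ξ_{m+1} = 0` (so `F(ξ_{m+1}/aₘ) = 0`). -/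
noncomputable def E (m : ℕ) (u k a d : ℕ → ℝ) (ξ : Fin m → ℝ) : ℝ :=
  (∑ i ∈ Finset.range (m + 1),
    -(k i * (u (i + 1) - u i) *
      Real.log ((if i = 0 then 1 else F (ext m ξ i / a i)) - F (ext m ξ (i + 1) / a i))))
  + ∑ i ∈ Finset.Icc 1 m, d i * (ext m ξ i) ^ 2 / 4

/-- The domain `Ω = {ξ₁ > ξ₂ > ⋯ > ξₘ > 0}`. -/
def Omega (m : ℕ) : Set (Fin m → ℝ) := {ξ | StrictAnti ξ ∧ ∀ i, 0 < ξ i}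

open MeasureTheory Set Filter

noncomputable def phi (z : ℝ) : ℝ := (1 / Real.sqrt Real.pi) * Real.exp (-z ^ 2 / 4)

lemma sqrt_pi_pos : 0 < Real.sqrt Real.pi := Real.sqrt_pos.2 Real.pi_pos

lemma phi_pos (z : ℝ) : 0 < phi z := by
  unfold phi; positivity

lemma phi_even (z : ℝ) : phi (-z) = phi z := by simp [phi]

lemma gauss_cont : Continuous (fun s : ℝ => Real.exp (-s ^ 2 / 4)) := by continuity

lemma gauss_integrable : Integrable (fun s : ℝ => Real.exp (-s ^ 2 / 4)) := by
  have h := integrable_exp_neg_mul_sq (by norm_num : (0:ℝ) < 4⁻¹)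
  convert h using 2 with s
  ring_nf

lemma F_hasDerivAt (z : ℝ) : HasDerivAt F (phi z) z := by
  have h : HasDerivAt (fun u => ∫ s in (0:ℝ)..u, Real.exp (-s ^ 2 / 4))
      (Real.exp (-z ^ 2 / 4)) z :=
    intervalIntegral.integral_hasDerivAt_right
      (gauss_integrable.intervalIntegrable)
      (gauss_cont.aestronglyMeasurable.stronglyMeasurableAtFilter)
      gauss_cont.continuousAt
  have hF : F = fun u => (1 / Real.sqrt Real.pi) * ∫ s in (0:ℝ)..u, Real.exp (-s ^ 2 / 4) := rfl
  rw [hF]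
  simpa [phi] using h.const_mul (1 / Real.sqrt Real.pi)

lemma F_strictMono : StrictMono F :=
  strictMono_of_deriv_pos fun z => by rw [(F_hasDerivAt z).deriv]; exact phi_pos z

lemma F_zero : F 0 = 0 := by simp [F]

lemma half_gauss : ∫ s in Ioi (0:ℝ), Real.exp (-s ^ 2 / 4) = Real.sqrt Real.pi := by
  have h := integral_gaussian_Ioi 4⁻¹
  have h2 : ∫ s in Ioi (0:ℝ), Real.exp (-s ^ 2 / 4) = ∫ s in Ioi (0:ℝ), Real.exp (-4⁻¹ * s ^ 2) := by
    congr 1; funext s; ring_nf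
  rw [h2, h]
  rw [show Real.pi / 4⁻¹ = 2 ^ 2 * Real.pi by ring]
  rw [Real.sqrt_mul (by positivity), Real.sqrt_sq (by norm_num)]
  ring

lemma split_gauss {z : ℝ} (hz : 0 ≤ z) :
    ∫ s in Ioi (0:ℝ), Real.exp (-s ^ 2 / 4)
      = (∫ s in (0:ℝ)..z, Real.exp (-s ^ 2 / 4)) + ∫ s in Ioi z, Real.exp (-s ^ 2 / 4) := by
  rw [intervalIntegral.integral_of_le hz]
  rw [← setIntegral_union (Ioc_disjoint_Ioi le_rfl) measurableSet_Ioi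
    gauss_integrable.integrableOn gauss_integrable.integrableOn]
  rw [Ioc_union_Ioi_eq_Ioi hz]

lemma neg_sq_four_hasDerivAt (x : ℝ) : HasDerivAt (fun s : ℝ => -s ^ 2 / 4) (-x / 2) x := by
  have := ((hasDerivAt_pow 2 x).neg.div_const 4)
  refine this.congr_deriv ?_
  ring

lemma gauss_moment (z : ℝ) :
    ∫ s in Ioi z, s * Real.exp (-s ^ 2 / 4) = 2 * Real.exp (-z ^ 2 / 4) := by
  have hderiv : ∀ x ∈ Ici z, HasDerivAt (fun s : ℝ => -2 * Real.exp (-s ^ 2 / 4))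
      (x * Real.exp (-x ^ 2 / 4)) x := by
    intro x _
    have h := ((neg_sq_four_hasDerivAt x).exp).const_mul (-2 : ℝ)
    refine h.congr_deriv ?_
    ring
  have hint : IntegrableOn (fun s : ℝ => s * Real.exp (-s ^ 2 / 4)) (Ioi z) := by
    have h := integrable_mul_exp_neg_mul_sq (by norm_num : (0:ℝ) < 4⁻¹)
    have h2 : (fun s : ℝ => s * Real.exp (-s ^ 2 / 4)) = fun s : ℝ => s * Real.exp (-4⁻¹ * s ^ 2) := by
      funext s; ring_nf
    rw [h2]; exact h.integrableOn
  have htend : Tendsto (fun s : ℝ => -2 * Real.exp (-s ^ 2 / 4)) atTop (nhds 0) := by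
    have h1 : Tendsto (fun s : ℝ => s ^ 2 / 4) atTop atTop :=
      (tendsto_pow_atTop (by norm_num)).atTop_div_const (by norm_num)
    have h2 : Tendsto (fun s : ℝ => Real.exp (-(s ^ 2 / 4))) atTop (nhds 0) :=
      Real.tendsto_exp_neg_atTop_nhds_zero.comp h1
    have h3 : Tendsto (fun s : ℝ => -2 * Real.exp (-(s ^ 2 / 4))) atTop (nhds 0) := by
      simpa using h2.const_mul (-2 : ℝ)
    convert h3 using 2 with s
    ring_nf
  have := integral_Ioi_of_hasDerivAt_of_tendsto' hderiv hint htend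
  rw [this]
  ring

lemma gauss_tail_le {z : ℝ} (hz : 0 < z) :
    ∫ s in Ioi z, Real.exp (-s ^ 2 / 4) ≤ 2 / z * Real.exp (-z ^ 2 / 4) := by
  have hmono : ∫ s in Ioi z, Real.exp (-s ^ 2 / 4)
      ≤ ∫ s in Ioi z, z⁻¹ * (s * Real.exp (-s ^ 2 / 4)) := by
    refine setIntegral_mono_on gauss_integrable.integrableOn ?_ measurableSet_Ioi ?_
    · have h := integrable_mul_exp_neg_mul_sq (by norm_num : (0:ℝ) < 4⁻¹)
      have h2 : (fun s : ℝ => z⁻¹ * (s * Real.exp (-s ^ 2 / 4)))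
          = fun s : ℝ => z⁻¹ * (s * Real.exp (-4⁻¹ * s ^ 2)) := by
        funext s; ring_nf
      rw [h2]; exact (h.const_mul _).integrableOn
    · intro s hs
      have hs1 : z < s := hs
      have h1 : (1:ℝ) ≤ z⁻¹ * s := by
        rw [inv_mul_eq_div, le_div_iff₀ hz]; linarith
      nlinarith [Real.exp_pos (-s ^ 2 / 4), h1]
  rw [MeasureTheory.integral_const_mul, gauss_moment] at hmono
  calc ∫ s in Ioi z, Real.exp (-s ^ 2 / 4) ≤ z⁻¹ * (2 * Real.exp (-z ^ 2 / 4)) := hmono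
    _ = 2 / z * Real.exp (-z ^ 2 / 4) := by ring

lemma gauss_tail_pos (z : ℝ) : 0 < ∫ s in Ioi z, Real.exp (-s ^ 2 / 4) := by
  refine (setIntegral_pos_iff_support_of_nonneg_ae ?_ gauss_integrable.integrableOn).2 ?_
  · filter_upwards with s using (Real.exp_pos _).le
  · have : Function.support (fun s : ℝ => Real.exp (-s ^ 2 / 4)) = univ := by
      ext s; simp [Function.support, (Real.exp_pos _).ne']
    rw [this, univ_inter]
    exact MeasureTheory.Measure.measure_Ioi_pos _ z

lemma F_tail_eq {z : ℝ} (hz : 0 ≤ z) :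
    1 - F z = (1 / Real.sqrt Real.pi) * ∫ s in Ioi z, Real.exp (-s ^ 2 / 4) := by
  have h := split_gauss hz
  have hc : (1 / Real.sqrt Real.pi) * Real.sqrt Real.pi = 1 := by
    field_simp
  unfold F
  rw [show (∫ s in (0:ℝ)..z, Real.exp (-s ^ 2 / 4))
      = Real.sqrt Real.pi - ∫ s in Ioi z, Real.exp (-s ^ 2 / 4) by
    rw [half_gauss] at h; linarith]
  have hs := sqrt_pi_pos.ne'
  field_simp
  ring

lemma F_lt_one (z : ℝ) : F z < 1 := by
  rcases le_or_gt z 0 with h | h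
  · calc F z ≤ F 0 := F_strictMono.monotone h
      _ = 0 := F_zero
      _ < 1 := one_pos
  · have h1 := F_tail_eq h.le
    have h2 := gauss_tail_pos z
    nlinarith [sqrt_pi_pos, mul_pos (show (0:ℝ) < 1 / Real.sqrt Real.pi by positivity) h2]

lemma F_neg (z : ℝ) : F (-z) = -F z := by
  unfold F
  have h : (∫ s in (0:ℝ)..z, Real.exp (-(-s) ^ 2 / 4)) = ∫ s in -z..(-0:ℝ), Real.exp (-s ^ 2 / 4) :=
    intervalIntegral.integral_comp_neg (fun s => Real.exp (-s ^ 2 / 4))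
  simp only [neg_sq, neg_zero] at h
  rw [show (∫ s in -z..(0:ℝ), Real.exp (-s ^ 2 / 4))
      = -∫ s in (0:ℝ)..(-z), Real.exp (-s ^ 2 / 4) from (intervalIntegral.integral_symm _ _)] at h
  rw [show (∫ s in (0:ℝ)..(-z), Real.exp (-s ^ 2 / 4))
      = -∫ s in (0:ℝ)..z, Real.exp (-s ^ 2 / 4) by linarith]
  ring

lemma F_gt_neg_one (z : ℝ) : -1 < F z := by
  rcases le_or_gt 0 z with h | h
  · have : F 0 ≤ F z := F_strictMono.monotone h
    rw [F_zero] at this; linarith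
  · have h1 : F z = -F (-z) := by rw [← F_neg, neg_neg]
    have := F_lt_one (-z)
    linarith

lemma F_tail_bound {z : ℝ} (hz : 0 < z) : 1 - F z ≤ 2 / z * phi z := by
  rw [F_tail_eq hz.le]
  have h := gauss_tail_le hz
  have hc : (0:ℝ) < 1 / Real.sqrt Real.pi := by positivity
  calc (1 / Real.sqrt Real.pi) * ∫ s in Ioi z, Real.exp (-s ^ 2 / 4)
      ≤ (1 / Real.sqrt Real.pi) * (2 / z * Real.exp (-z ^ 2 / 4)) := by nlinarith
    _ = 2 / z * phi z := by unfold phi; ring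

lemma phi_hasDerivAt (z : ℝ) : HasDerivAt phi (-(z / 2) * phi z) z := by
  have h := ((neg_sq_four_hasDerivAt z).exp).const_mul (1 / Real.sqrt Real.pi)
  have hv : -(z / 2) * phi z = (1 / Real.sqrt Real.pi) * (Real.exp (-z ^ 2 / 4) * (-z / 2)) := by
    unfold phi; ring
  rw [hv]
  exact h

lemma P1 {X Y : ℝ} (h : Y < X) : 0 < phi X + X / 2 * (F X - F Y) := by
  rcases le_or_gt 0 X with hX | hX
  · have hG : 0 < F X - F Y := sub_pos.2 (F_strictMono h)
    nlinarith [phi_pos X, mul_nonneg (by linarith : (0:ℝ) ≤ X / 2) hG.le]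
  · have h1 : F X + 1 ≤ 2 / (-X) * phi X := by
      have h2 : F X + 1 = 1 - F (-X) := by rw [F_neg]; ring
      rw [h2]
      have := F_tail_bound (show (0:ℝ) < -X by linarith)
      rwa [phi_even] at this
    have hG : F X - F Y < F X + 1 := by linarith [F_gt_neg_one Y]
    have h3 : F X - F Y < 2 / (-X) * phi X := lt_of_lt_of_le hG h1
    have h4 : (-X / 2) * (F X - F Y) < (-X / 2) * (2 / (-X) * phi X) :=
      mul_lt_mul_of_pos_left h3 (by linarith)
    have hX0 : X ≠ 0 := ne_of_lt hX
    have h5 : (-X / 2) * (2 / (-X) * phi X) = phi X := by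
      field_simp
    nlinarith [h4, h5]

lemma K_pos {X Y : ℝ} (h : Y < X) :
    0 < (X * phi Y - Y * phi X) / 2 - Y / 4 * X * (F X - F Y) := by
  set κ : ℝ → ℝ := fun t => (t * phi Y - Y * phi t) / 2 - Y / 4 * t * (F t - F Y) with hκ
  have hd : ∀ t : ℝ, HasDerivAt κ (phi Y / 2 - Y / 4 * (F t - F Y)) t := by
    intro t
    have h1 : HasDerivAt (fun t : ℝ => t * phi Y) (phi Y) t := by
      simpa using (hasDerivAt_id t).mul_const (phi Y)
    have h2 : HasDerivAt (fun t : ℝ => Y * phi t) (Y * (-(t / 2) * phi t)) t :=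
      (phi_hasDerivAt t).const_mul Y
    have h3 : HasDerivAt (fun t : ℝ => F t - F Y) (phi t) t := (F_hasDerivAt t).sub_const _
    have h4 : HasDerivAt (fun t : ℝ => Y / 4 * t) (Y / 4) t := by
      simpa using (hasDerivAt_id t).const_mul (Y / 4)
    have h5 := h4.mul h3
    have h6 := ((h1.sub h2).div_const 2).sub h5
    refine h6.congr_deriv ?_
    ring
  have hpos : ∀ t : ℝ, Y < t → 0 < phi Y / 2 - Y / 4 * (F t - F Y) := by
    intro t ht
    rcases le_or_gt Y 0 with hY | hY
    · have hG : 0 < F t - F Y := sub_pos.2 (F_strictMono ht)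
      nlinarith [phi_pos Y, mul_nonneg (by linarith : (0:ℝ) ≤ -Y / 4) hG.le]
    · have h1 : F t - F Y < 2 / Y * phi Y := by
        linarith [F_tail_bound hY, F_lt_one t]
      have h2 : Y / 4 * (F t - F Y) < Y / 4 * (2 / Y * phi Y) :=
        mul_lt_mul_of_pos_left h1 (by linarith)
      have h3 : Y / 4 * (2 / Y * phi Y) = phi Y / 2 := by field_simp; ring
      linarith
  have hmono : StrictMonoOn κ (Icc Y X) := by
    refine strictMonoOn_of_deriv_pos (convex_Icc Y X) ?_ ?_
    · exact (Differentiable.continuous (fun t => (hd t).differentiableAt)).continuousOn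
    · intro t ht
      rw [interior_Icc] at ht
      rw [(hd t).deriv]
      exact hpos t ht.1
  have hlt := hmono (left_mem_Icc.2 h.le) (right_mem_Icc.2 h.le) h
  have hY0 : κ Y = 0 := by rw [hκ]; ring
  rw [hY0] at hlt
  exact hlt

lemma seg_strictConvex (x1 y1 A B : ℝ) (hAB : A ≠ 0 ∨ B ≠ 0)
    (hseg : ∀ r ∈ Icc (0:ℝ) 1, y1 + r * B < x1 + r * A) :
    StrictConvexOn ℝ (Icc (0:ℝ) 1)
      (fun r => -Real.log (F (x1 + r * A) - F (y1 + r * B))) := by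
  set X : ℝ → ℝ := fun r => x1 + r * A with hX
  set Y : ℝ → ℝ := fun r => y1 + r * B with hY
  set G : ℝ → ℝ := fun r => F (X r) - F (Y r) with hG
  set g : ℝ → ℝ := fun r => -Real.log (G r) with hg
  have hXd : ∀ r : ℝ, HasDerivAt X A r := by
    intro r
    simpa [hX] using ((hasDerivAt_id r).mul_const A).const_add x1
  have hYd : ∀ r : ℝ, HasDerivAt Y B r := by
    intro r
    simpa [hY] using ((hasDerivAt_id r).mul_const B).const_add y1
  have hGd : ∀ r : ℝ, HasDerivAt G (A * phi (X r) - B * phi (Y r)) r := by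
    intro r
    have h1 := (F_hasDerivAt (X r)).comp r (hXd r)
    have h2 := (F_hasDerivAt (Y r)).comp r (hYd r)
    have := h1.sub h2
    refine this.congr_deriv ?_
    ring
  have hGcont : Continuous G := Differentiable.continuous (fun r => (hGd r).differentiableAt)
  have hgd : ∀ r : ℝ, 0 < G r →
      HasDerivAt g (-((A * phi (X r) - B * phi (Y r)) / G r)) r := by
    intro r hr
    exact ((hGd r).log hr.ne').neg
  set g1 : ℝ → ℝ := fun r => -((A * phi (X r) - B * phi (Y r)) / G r) with hg1
  have hg1d : ∀ r : ℝ, 0 < G r → HasDerivAt g1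
      (-(((A ^ 2 * (-(X r / 2) * phi (X r)) - B ^ 2 * (-(Y r / 2) * phi (Y r))) * G r
        - (A * phi (X r) - B * phi (Y r)) * (A * phi (X r) - B * phi (Y r))) / (G r) ^ 2)) r := by
    intro r hr
    have hDd : HasDerivAt (fun w => A * phi (X w) - B * phi (Y w))
        (A ^ 2 * (-(X r / 2) * phi (X r)) - B ^ 2 * (-(Y r / 2) * phi (Y r))) r := by
      have h1 := ((phi_hasDerivAt (X r)).comp r (hXd r)).const_mul A
      have h2 := ((phi_hasDerivAt (Y r)).comp r (hYd r)).const_mul B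
      have := h1.sub h2
      refine this.congr_deriv ?_
      ring
    exact (hDd.div (hGd r) hr.ne').neg
  -- positivity of G on the segment
  have hGpos : ∀ r ∈ Icc (0:ℝ) 1, 0 < G r := by
    intro r hr
    exact sub_pos.2 (F_strictMono (hseg r hr))
  refine strictConvexOn_of_deriv2_pos (convex_Icc 0 1) ?_ ?_
  · intro r hr
    exact ((hgd r (hGpos r hr)).differentiableAt.continuousAt).continuousWithinAt
  · intro r hr
    rw [interior_Icc] at hr
    have hrIcc : r ∈ Icc (0:ℝ) 1 := ⟨hr.1.le, hr.2.le⟩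
    have hGr : 0 < G r := hGpos r hrIcc
    have hev : ∀ᶠ w in nhds r, 0 < G w := by
      have hopen : IsOpen {w : ℝ | 0 < G w} := isOpen_lt continuous_const hGcont
      exact hopen.mem_nhds hGr
    have hderiv_eq : deriv g =ᶠ[nhds r] g1 := by
      filter_upwards [hev] with w hw
      exact (hgd w hw).deriv
    have h2 : deriv^[2] g r = deriv (deriv g) r := rfl
    rw [h2, hderiv_eq.deriv_eq, (hg1d r hGr).deriv]
    -- now positivity of the explicit second derivative
    have hYX : Y r < X r := hseg r hrIcc
    have hA' := P1 hYX
    have hK := K_pos hYX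
    set PA : ℝ := phi (X r) * (phi (X r) + X r / 2 * G r) with hPA
    set PB : ℝ := phi (Y r) * (phi (Y r) - Y r / 2 * G r) with hPB
    set PC : ℝ := phi (X r) * phi (Y r) with hPC
    have hPApos : 0 < PA := by
      rw [hPA, hG]
      exact mul_pos (phi_pos _) (P1 hYX)
    have hdet : 0 < PA * PB - PC ^ 2 := by
      have hid : PA * PB - PC ^ 2
          = phi (X r) * phi (Y r) * G r *
            ((X r * phi (Y r) - Y r * phi (X r)) / 2 - Y r / 4 * X r * G r) := by
        rw [hPA, hPB, hPC]; ring
      rw [hid, hG]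
      exact mul_pos (mul_pos (mul_pos (phi_pos _) (phi_pos _)) hGr)
        (by rw [← hG]; rw [hG]; exact K_pos hYX)
    have hnum : -(((A ^ 2 * (-(X r / 2) * phi (X r)) - B ^ 2 * (-(Y r / 2) * phi (Y r))) * G r
        - (A * phi (X r) - B * phi (Y r)) * (A * phi (X r) - B * phi (Y r))) / (G r) ^ 2)
        = (A ^ 2 * PA + B ^ 2 * PB - 2 * A * B * PC) / (G r) ^ 2 := by
      rw [hPA, hPB, hPC]; ring
    rw [hnum]
    have hNpos : 0 < A ^ 2 * PA + B ^ 2 * PB - 2 * A * B * PC := by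
      have key : (A ^ 2 * PA + B ^ 2 * PB - 2 * A * B * PC) * PA
          = (A * PA - B * PC) ^ 2 + B ^ 2 * (PA * PB - PC ^ 2) := by ring
      rcases eq_or_ne B 0 with hB | hB
      · rcases hAB with hA | hB'
        · have hA2 : 0 < A ^ 2 := by positivity
          rw [hB]
          nlinarith [mul_pos hA2 hPApos]
        · exact absurd hB hB'
      · have hB2 : 0 < B ^ 2 := by positivity
        nlinarith [key, mul_pos hB2 hdet, sq_nonneg (A * PA - B * PC), hPApos]
    positivity

lemma seg_aux {x1 y1 x2 y2 : ℝ} (h1 : y1 < x1) (h2 : y2 < x2) :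
    ∀ r ∈ Icc (0:ℝ) 1, y1 + r * (y2 - y1) < x1 + r * (x2 - x1) := by
  intro r hr
  rcases eq_or_lt_of_le hr.2 with h | h
  · rw [h]; linarith
  · nlinarith [mul_le_mul_of_nonneg_left (le_of_lt h2) hr.1,
      mul_pos (sub_pos.2 h) (sub_pos.2 h1), hr.1]

lemma cor_lt {x1 y1 x2 y2 s t : ℝ} (h1 : y1 < x1) (h2 : y2 < x2)
    (hne : x1 ≠ x2 ∨ y1 ≠ y2) (hs : 0 < s) (ht : 0 < t) (hst : s + t = 1) :
    -Real.log (F (s * x1 + t * x2) - F (s * y1 + t * y2))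
      < s * (-Real.log (F x1 - F y1)) + t * (-Real.log (F x2 - F y2)) := by
  have hAB : x2 - x1 ≠ 0 ∨ y2 - y1 ≠ 0 := by
    rcases hne with h | h
    · exact Or.inl (sub_ne_zero.2 (Ne.symm h))
    · exact Or.inr (sub_ne_zero.2 (Ne.symm h))
  have hconv := seg_strictConvex x1 y1 (x2 - x1) (y2 - y1) hAB (seg_aux h1 h2)
  have h01 : (0:ℝ) ∈ Icc (0:ℝ) 1 := left_mem_Icc.2 zero_le_one
  have h11 : (1:ℝ) ∈ Icc (0:ℝ) 1 := right_mem_Icc.2 zero_le_one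
  have := hconv.2 h01 h11 (by norm_num) hs ht hst
  simp only [smul_eq_mul, mul_zero, mul_one, zero_add, add_zero, zero_mul, one_mul,
    add_sub_cancel] at this
  have hs' : s = 1 - t := by linarith
  subst hs'
  rw [show (1 - t) * x1 + t * x2 = x1 + t * (x2 - x1) by ring,
    show (1 - t) * y1 + t * y2 = y1 + t * (y2 - y1) by ring]
  linarith

lemma cor_le {x1 y1 x2 y2 s t : ℝ} (h1 : y1 < x1) (h2 : y2 < x2)
    (hs : 0 ≤ s) (ht : 0 ≤ t) (hst : s + t = 1) :
    -Real.log (F (s * x1 + t * x2) - F (s * y1 + t * y2))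
      ≤ s * (-Real.log (F x1 - F y1)) + t * (-Real.log (F x2 - F y2)) := by
  rcases eq_or_lt_of_le hs with hs0 | hs0
  · have ht1 : t = 1 := by linarith
    rw [← hs0, ht1]
    simp
  · rcases eq_or_lt_of_le ht with ht0 | ht0
    · have hs1 : s = 1 := by linarith
      rw [← ht0, hs1]
      simp
    · by_cases hne : x1 = x2 ∧ y1 = y2
      · obtain ⟨hx, hy⟩ := hne
        subst hx; subst hy
        have e1 : s * x1 + t * x1 = x1 := by linear_combination x1 * hst
        have e2 : s * y1 + t * y1 = y1 := by linear_combination y1 * hst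
        rw [e1, e2]
        linear_combination (-(Real.log (F x1 - F y1))) * hst.symm
      · have hne' : x1 ≠ x2 ∨ y1 ≠ y2 := by tauto
        exact (cor_lt h1 h2 hne' hs0 ht0 hst).le

lemma f0_convex : ConvexOn ℝ univ (fun y : ℝ => -Real.log (1 - F y)) := by
  set f1 : ℝ → ℝ := fun y => phi y / (1 - F y) with hf1
  have h1F : ∀ y : ℝ, 0 < 1 - F y := fun y => by linarith [F_lt_one y]
  have hf0d : ∀ y : ℝ, HasDerivAt (fun y : ℝ => -Real.log (1 - F y)) (f1 y) y := by
    intro y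
    have h := (((F_hasDerivAt y).const_sub 1).log (h1F y).ne').neg
    refine h.congr_deriv ?_
    rw [hf1]
    field_simp
  have hderiv0 : deriv (fun y : ℝ => -Real.log (1 - F y)) = f1 :=
    funext fun y => (hf0d y).deriv
  have hf1d : ∀ y : ℝ, HasDerivAt f1
      ((-(y / 2) * phi y * (1 - F y) - phi y * -(phi y)) / (1 - F y) ^ 2) y := by
    intro y
    exact (phi_hasDerivAt y).div ((F_hasDerivAt y).const_sub 1) (h1F y).ne'
  refine convexOn_of_deriv2_nonneg' convex_univ ?_ ?_ ?_
  · intro y _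
    exact (hf0d y).differentiableAt.differentiableWithinAt
  · intro y _
    rw [hderiv0]
    exact (hf1d y).differentiableAt.differentiableWithinAt
  · intro y _
    have h2 : deriv^[2] (fun y : ℝ => -Real.log (1 - F y)) y
        = deriv (deriv (fun y : ℝ => -Real.log (1 - F y))) y := rfl
    rw [h2, hderiv0, (hf1d y).deriv]
    have hnumge : 0 ≤ phi y - y / 2 * (1 - F y) := by
      rcases le_or_gt y 0 with hy | hy
      · nlinarith [phi_pos y, h1F y]
      · have hb := F_tail_bound hy
        have h3 : y / 2 * (1 - F y) ≤ y / 2 * (2 / y * phi y) :=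
          mul_le_mul_of_nonneg_left hb (by linarith)
        have h4 : y / 2 * (2 / y * phi y) = phi y := by
          field_simp
        linarith
    have hid : (-(y / 2) * phi y * (1 - F y) - phi y * -(phi y)) / (1 - F y) ^ 2
        = phi y * (phi y - y / 2 * (1 - F y)) / (1 - F y) ^ 2 := by ring
    rw [hid]
    exact div_nonneg (mul_nonneg (phi_pos y).le hnumge) (sq_nonneg _)

lemma cor0_le {y1 y2 s t : ℝ} (hs : 0 ≤ s) (ht : 0 ≤ t) (hst : s + t = 1) :
    -Real.log (1 - F (s * y1 + t * y2))
      ≤ s * (-Real.log (1 - F y1)) + t * (-Real.log (1 - F y2)) := by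
  have := f0_convex.2 (mem_univ y1) (mem_univ y2) hs ht hst
  simpa using this

lemma div_ne' {x y c : ℝ} (hc : c ≠ 0) (h : x ≠ y) : x / c ≠ y / c := by
  intro hEq
  apply h
  field_simp at hEq
  exact hEq

lemma ext_of_mem (m : ℕ) (ξ : Fin m → ℝ) (i : ℕ) (h1 : 1 ≤ i) (h2 : i ≤ m) :
    ext m ξ i = ξ ⟨i - 1, by omega⟩ := dif_pos ⟨h1, h2⟩

lemma ext_of_gt (m : ℕ) (ξ : Fin m → ℝ) (i : ℕ) (h : m < i) : ext m ξ i = 0 :=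
  dif_neg (by omega)

lemma ext_lin (m : ℕ) (s t : ℝ) (p q : Fin m → ℝ) (i : ℕ) :
    ext m (s • p + t • q) i = s * ext m p i + t * ext m q i := by
  unfold _root_.ext
  by_cases h : 1 ≤ i ∧ i ≤ m
  · rw [dif_pos h, dif_pos h, dif_pos h]
    simp [Pi.add_apply, Pi.smul_apply, smul_eq_mul]
  · rw [dif_neg h, dif_neg h, dif_neg h]
    ring

lemma ext_ord {m : ℕ} {ξ : Fin m → ℝ} (hξ : ξ ∈ Omega m) (i : ℕ) (h1 : 1 ≤ i) (h2 : i ≤ m) :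
    ext m ξ (i + 1) < ext m ξ i := by
  obtain ⟨hanti, hpos⟩ := hξ
  rw [ext_of_mem m ξ i h1 h2]
  rcases eq_or_lt_of_le h2 with hm | hm
  · rw [ext_of_gt m ξ (i + 1) (by omega)]
    exact hpos _
  · rw [ext_of_mem m ξ (i + 1) (by omega) (by omega)]
    exact hanti (by simp [Fin.mk_lt_mk]; omega)

section Terms
variable {m : ℕ} {u k a : ℕ → ℝ} {p q : Fin m → ℝ} {s t : ℝ}

lemma term_le (hm : 1 ≤ m)
    (hk : ∀ i ≤ m, 0 < k i) (ha : ∀ i ≤ m, 0 < a i)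
    (hu0 : u 0 ≤ u 1) (hu : ∀ i, 1 ≤ i → i ≤ m → u i < u (i + 1))
    (hp : p ∈ Omega m) (hq : q ∈ Omega m)
    (hs : 0 ≤ s) (ht : 0 ≤ t) (hst : s + t = 1) (i : ℕ) (hi : i < m + 1) :
    -(k i * (u (i + 1) - u i) *
      Real.log ((if i = 0 then 1 else F (ext m (s • p + t • q) i / a i))
        - F (ext m (s • p + t • q) (i + 1) / a i)))
    ≤ s * -(k i * (u (i + 1) - u i) *
        Real.log ((if i = 0 then 1 else F (ext m p i / a i)) - F (ext m p (i + 1) / a i)))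
      + t * -(k i * (u (i + 1) - u i) *
        Real.log ((if i = 0 then 1 else F (ext m q i / a i)) - F (ext m q (i + 1) / a i))) := by
  have him : i ≤ m := by omega
  have hai : 0 < a i := ha i him
  have ew : ext m (s • p + t • q) (i + 1) / a i
      = s * (ext m p (i + 1) / a i) + t * (ext m q (i + 1) / a i) := by
    rw [ext_lin]; ring
  rcases Nat.eq_zero_or_pos i with h0 | hpos
  · subst h0
    simp only [reduceIte]
    have hc0 : 0 ≤ k 0 * (u 1 - u 0) := mul_nonneg (hk 0 (by omega)).le (by linarith)
    rw [ew]
    have hcor := cor0_le (y1 := ext m p 1 / a 0) (y2 := ext m q 1 / a 0) hs ht hst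
    nlinarith [mul_le_mul_of_nonneg_left hcor hc0]
  · have hne0 : i ≠ 0 := by omega
    simp only [if_neg hne0]
    have hc : 0 < k i * (u (i + 1) - u i) :=
      mul_pos (hk i him) (sub_pos.2 (hu i hpos him))
    have ew2 : ext m (s • p + t • q) i / a i
        = s * (ext m p i / a i) + t * (ext m q i / a i) := by
      rw [ext_lin]; ring
    rw [ew, ew2]
    have h1 : ext m p (i + 1) / a i < ext m p i / a i :=
      (div_lt_div_iff_of_pos_right hai).2 (ext_ord hp i hpos him)
    have h2 : ext m q (i + 1) / a i < ext m q i / a i :=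
      (div_lt_div_iff_of_pos_right hai).2 (ext_ord hq i hpos him)
    have hcor := cor_le h1 h2 hs ht hst
    nlinarith [mul_le_mul_of_nonneg_left hcor hc.le]

lemma term_lt (hm : 1 ≤ m)
    (hk : ∀ i ≤ m, 0 < k i) (ha : ∀ i ≤ m, 0 < a i)
    (hu : ∀ i, 1 ≤ i → i ≤ m → u i < u (i + 1))
    (hp : p ∈ Omega m) (hq : q ∈ Omega m)
    (hs : 0 < s) (ht : 0 < t) (hst : s + t = 1) (i : ℕ)
    (h1i : 1 ≤ i) (hi : i ≤ m) (hne : ext m p i ≠ ext m q i) :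
    -(k i * (u (i + 1) - u i) *
      Real.log ((if i = 0 then 1 else F (ext m (s • p + t • q) i / a i))
        - F (ext m (s • p + t • q) (i + 1) / a i)))
    < s * -(k i * (u (i + 1) - u i) *
        Real.log ((if i = 0 then 1 else F (ext m p i / a i)) - F (ext m p (i + 1) / a i)))
      + t * -(k i * (u (i + 1) - u i) *
        Real.log ((if i = 0 then 1 else F (ext m q i / a i)) - F (ext m q (i + 1) / a i))) := by
  have hai : 0 < a i := ha i hi
  have hne0 : i ≠ 0 := by omega
  simp only [if_neg hne0]
  have hc : 0 < k i * (u (i + 1) - u i) := mul_pos (hk i hi) (sub_pos.2 (hu i h1i hi))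
  have ew : ext m (s • p + t • q) (i + 1) / a i
      = s * (ext m p (i + 1) / a i) + t * (ext m q (i + 1) / a i) := by
    rw [ext_lin]; ring
  have ew2 : ext m (s • p + t • q) i / a i
      = s * (ext m p i / a i) + t * (ext m q i / a i) := by
    rw [ext_lin]; ring
  rw [ew, ew2]
  have h1 : ext m p (i + 1) / a i < ext m p i / a i :=
    (div_lt_div_iff_of_pos_right hai).2 (ext_ord hp i h1i hi)
  have h2 : ext m q (i + 1) / a i < ext m q i / a i :=
    (div_lt_div_iff_of_pos_right hai).2 (ext_ord hq i h1i hi)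
  have hcor := cor_lt h1 h2 (Or.inl (div_ne' hai.ne' hne)) hs ht hst
  nlinarith [mul_lt_mul_of_pos_left hcor hc]

end Terms

lemma omega_convex (m : ℕ) : Convex ℝ (Omega m) := by
  intro p hp q hq s t hs ht hst
  constructor
  · intro i j hij
    simp only [Pi.add_apply, Pi.smul_apply, smul_eq_mul]
    rcases eq_or_lt_of_le hs with hs0 | hs0
    · have ht1 : t = 1 := by linarith
      rw [← hs0, ht1]
      simpa using hq.1 hij
    · have h1 : s * p j < s * p i := mul_lt_mul_of_pos_left (hp.1 hij) hs0
      have h2 : t * q j ≤ t * q i := mul_le_mul_of_nonneg_left (hq.1 hij).le ht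
      linarith
  · intro i
    simp only [Pi.add_apply, Pi.smul_apply, smul_eq_mul]
    rcases eq_or_lt_of_le hs with hs0 | hs0
    · have ht1 : t = 1 := by linarith
      rw [← hs0, ht1]
      simpa using hq.2 i
    · nlinarith [mul_pos hs0 (hp.2 i), mul_nonneg ht (hq.2 i).le]

theorem E_strictConvexOn (m : ℕ) (hm : 1 ≤ m) (u k a d : ℕ → ℝ)
    (hk : ∀ i ≤ m, 0 < k i) (ha : ∀ i ≤ m, 0 < a i)
    (hd : ∀ i, 1 ≤ i → i ≤ m → 0 ≤ d i)
    (hu0 : u 0 ≤ u 1) (hu : ∀ i, 1 ≤ i → i ≤ m → u i < u (i + 1))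
    (hd1 : u 0 = u 1 → 0 < d 1) :
    StrictConvexOn ℝ (Omega m) (E m u k a d) := by
  constructor
  · exact omega_convex m
  · intro p hp q hq hpq s t hs ht hst
    obtain ⟨j, hj⟩ := Function.ne_iff.1 hpq
    have hjm : (j : ℕ) + 1 ≤ m := j.isLt
    have hfin : (⟨(j : ℕ) + 1 - 1, by omega⟩ : Fin m) = j := by
      apply Fin.ext; simp
    have hextne : ext m p ((j : ℕ) + 1) ≠ ext m q ((j : ℕ) + 1) := by
      rw [ext_of_mem m p _ (by omega) hjm, ext_of_mem m q _ (by omega) hjm, hfin]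
      exact hj
    have hS1 : (∑ i ∈ Finset.range (m + 1),
        -(k i * (u (i + 1) - u i) *
          Real.log ((if i = 0 then 1 else F (ext m (s • p + t • q) i / a i))
            - F (ext m (s • p + t • q) (i + 1) / a i))))
        < ∑ i ∈ Finset.range (m + 1),
          (s * -(k i * (u (i + 1) - u i) *
            Real.log ((if i = 0 then 1 else F (ext m p i / a i)) - F (ext m p (i + 1) / a i)))
          + t * -(k i * (u (i + 1) - u i) *
            Real.log ((if i = 0 then 1 else F (ext m q i / a i)) - F (ext m q (i + 1) / a i)))) := by
      refine Finset.sum_lt_sum ?_ ?_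
      · intro i hi
        exact term_le hm hk ha hu0 hu hp hq hs.le ht.le hst i (Finset.mem_range.1 hi)
      · exact ⟨(j : ℕ) + 1, Finset.mem_range.2 (by omega),
          term_lt hm hk ha hu hp hq hs ht hst ((j : ℕ) + 1) (by omega) hjm hextne⟩
    have hS2 : (∑ i ∈ Finset.Icc 1 m, d i * (ext m (s • p + t • q) i) ^ 2 / 4)
        ≤ ∑ i ∈ Finset.Icc 1 m,
          (s * (d i * (ext m p i) ^ 2 / 4) + t * (d i * (ext m q i) ^ 2 / 4)) := by
      refine Finset.sum_le_sum ?_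
      intro i hi
      rw [Finset.mem_Icc] at hi
      rw [ext_lin]
      have hd' := hd i hi.1 hi.2
      have hj2 : (s * ext m p i + t * ext m q i) ^ 2
          ≤ s * (ext m p i) ^ 2 + t * (ext m q i) ^ 2 := by
        nlinarith [mul_nonneg (mul_nonneg hs.le ht.le) (sq_nonneg (ext m p i - ext m q i))]
      nlinarith [mul_le_mul_of_nonneg_left hj2 (by linarith : (0:ℝ) ≤ d i / 4)]
    rw [Finset.sum_add_distrib, ← Finset.mul_sum, ← Finset.mul_sum] at hS1
    rw [Finset.sum_add_distrib, ← Finset.mul_sum, ← Finset.mul_sum] at hS2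
    simp only [smul_eq_mul, E]
    linarith
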